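/- Let p ∈ (0,∞), let (Ω, 𝒜, μ) be a finite measure space, let φ : Ω → ℂ be measurable, and let Z be a set of measurable functions on Ω such that q(φ)·f ∈ L^p(μ) for every q ∈ Π(z) and f ∈ Z. Set G := {q(φ)·f : q ∈ Π(z), f ∈ Z}. Then the following are equivalent: (c) the set {(g, φ·g) : g ∈ G} is dense in the graph {(g, φ·g) : g ∈ L^p(μ), φ·g ∈ L^p(μ)} with respect to the product L^p topology; (d) the set {g·(1+|φ|^p)^{1/p} : g ∈ G} is dense in L^p(μ); (e) G is dense in L^p(ν), where ν is the measure with density (1+|φ|^p) with respect to μ. -/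

import Mathlib

open MeasureTheory Filter ENNReal


section Aux13

variable {Ω : Type*} [MeasurableSpace Ω]

/-- eLpNorm < ε iff the p-th power integral is < ε^p. -/
lemma aux13_lt_iff {p : ℝ} (hp : 0 < p) (μ : Measure Ω) (h : Ω → ℂ) {ε : ℝ} (hε : 0 < ε) :
    eLpNorm h (ENNReal.ofReal p) μ < ENNReal.ofReal ε ↔
      ∫⁻ ω, (‖h ω‖₊ : ℝ≥0∞) ^ p ∂μ < ENNReal.ofReal (ε ^ p) := by
  rw [eLpNorm_eq_lintegral_rpow_enorm_toReal (ENNReal.ofReal_pos.mpr hp).ne'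
      (by simp), ENNReal.toReal_ofReal hp.le]
  simp only [enorm_eq_nnnorm]
  have hεp : ENNReal.ofReal ε = ENNReal.ofReal (ε ^ p) ^ (1 / p) := by
    rw [ENNReal.ofReal_rpow_of_pos (Real.rpow_pos_of_pos hε p), ← Real.rpow_mul hε.le,
      mul_one_div_cancel hp.ne', Real.rpow_one]
  rw [hεp, ENNReal.rpow_lt_rpow_iff (by positivity : (0:ℝ) < 1 / p)]

lemma aux13_lt_top_iff {p : ℝ} (hp : 0 < p) (μ : Measure Ω) (h : Ω → ℂ) :
    eLpNorm h (ENNReal.ofReal p) μ < ∞ ↔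
      ∫⁻ ω, (‖h ω‖₊ : ℝ≥0∞) ^ p ∂μ < ∞ := by
  rw [eLpNorm_eq_lintegral_rpow_enorm_toReal (ENNReal.ofReal_pos.mpr hp).ne'
      (by simp), ENNReal.toReal_ofReal hp.le]
  simp only [enorm_eq_nnnorm]
  rw [ENNReal.rpow_lt_top_iff_of_pos (by positivity : (0:ℝ) < 1 / p)]

lemma aux13_memlp_iff {p : ℝ} (hp : 0 < p) (μ : Measure Ω) (h : Ω → ℂ) :
    MemLp h (ENNReal.ofReal p) μ ↔
      AEStronglyMeasurable h μ ∧ ∫⁻ ω, (‖h ω‖₊ : ℝ≥0∞) ^ p ∂μ < ∞ := by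
  rw [MemLp, aux13_lt_top_iff hp]

end Aux13

section Aux13b

variable {Ω : Type*} [MeasurableSpace Ω] {p : ℝ} {μ : Measure Ω} {φ : Ω → ℂ}

lemma aux13_w_meas (hφ : Measurable φ) :
    Measurable (fun ω => 1 + (‖φ ω‖₊ : ℝ≥0∞) ^ p) :=
  measurable_const.add (hφ.nnnorm.coe_nnreal_ennreal.pow measurable_const)

lemma aux13_pt1 (hp : 0 < p) (φ h : Ω → ℂ) (ω : Ω) :
    (1 + (‖φ ω‖₊ : ℝ≥0∞) ^ p) * (‖h ω‖₊ : ℝ≥0∞) ^ p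
      = (‖h ω‖₊ : ℝ≥0∞) ^ p + (‖φ ω * h ω‖₊ : ℝ≥0∞) ^ p := by
  rw [add_mul, one_mul, nnnorm_mul, ENNReal.coe_mul,
    ENNReal.mul_rpow_of_nonneg _ _ hp.le]

lemma aux13_pt2 (hp : 0 < p) (φ h : Ω → ℂ) (ω : Ω) :
    (1 + (‖φ ω‖₊ : ℝ≥0∞) ^ p) * (‖h ω‖₊ : ℝ≥0∞) ^ p
      = (‖h ω * (((1 + ‖φ ω‖ ^ p) ^ (1 / p) : ℝ) : ℂ)‖₊ : ℝ≥0∞) ^ p := by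
  have hb : (0:ℝ) ≤ 1 + ‖φ ω‖ ^ p := by positivity
  have hW : (0:ℝ) ≤ (1 + ‖φ ω‖ ^ p) ^ (1 / p) := Real.rpow_nonneg hb _
  simp only [← enorm_eq_nnnorm]
  rw [← ofReal_norm (h ω), ← ofReal_norm (φ ω),
    ← ofReal_norm]
  rw [norm_mul, Complex.norm_real, Real.norm_of_nonneg hW,
    ENNReal.ofReal_mul (norm_nonneg _),
    ENNReal.mul_rpow_of_nonneg _ _ hp.le,
    ENNReal.ofReal_rpow_of_nonneg hW hp.le,
    ← Real.rpow_mul hb, one_div_mul_cancel hp.ne', Real.rpow_one,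
    ENNReal.ofReal_add zero_le_one (by positivity), ENNReal.ofReal_one,
    ← ENNReal.ofReal_rpow_of_nonneg (norm_nonneg _) hp.le]
  ring

end Aux13b

section Aux13c
set_option linter.unusedSectionVars false

variable {Ω : Type*} [MeasurableSpace Ω] {p : ℝ} {μ : Measure Ω} {φ : Ω → ℂ}

lemma aux13_w_lt_top (hp : 0 < p) (φ : Ω → ℂ) (ω : Ω) :
    (1 + (‖φ ω‖₊ : ℝ≥0∞) ^ p) < ∞ :=
  ENNReal.add_lt_top.mpr ⟨ENNReal.one_lt_top,
    ENNReal.rpow_lt_top_of_nonneg hp.le ENNReal.coe_ne_top⟩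

lemma aux13_I_nu (hp : 0 < p) (hφ : Measurable φ) {h : Ω → ℂ}
    (hh : AEMeasurable h μ) :
    ∫⁻ ω, (‖h ω‖₊ : ℝ≥0∞) ^ p ∂(μ.withDensity fun ω => 1 + (‖φ ω‖₊ : ℝ≥0∞) ^ p)
      = ∫⁻ ω, (‖h ω‖₊ : ℝ≥0∞) ^ p ∂μ + ∫⁻ ω, (‖φ ω * h ω‖₊ : ℝ≥0∞) ^ p ∂μ := by
  rw [lintegral_withDensity_eq_lintegral_mul_non_measurable μ (aux13_w_meas hφ)
    (Eventually.of_forall (aux13_w_lt_top hp φ))]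
  simp only [Pi.mul_apply]
  simp_rw [aux13_pt1 hp φ h]
  exact lintegral_add_left' (hh.nnnorm.coe_nnreal_ennreal.pow aemeasurable_const) _

lemma aux13_I_W (hp : 0 < p) (hφ : Measurable φ) (h : Ω → ℂ) :
    ∫⁻ ω, (‖h ω * (((1 + ‖φ ω‖ ^ p) ^ (1 / p) : ℝ) : ℂ)‖₊ : ℝ≥0∞) ^ p ∂μ
      = ∫⁻ ω, (‖h ω‖₊ : ℝ≥0∞) ^ p
          ∂(μ.withDensity fun ω => 1 + (‖φ ω‖₊ : ℝ≥0∞) ^ p) := by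
  rw [lintegral_withDensity_eq_lintegral_mul_non_measurable μ (aux13_w_meas hφ)
    (Eventually.of_forall (aux13_w_lt_top hp φ))]
  exact lintegral_congr fun ω => (aux13_pt2 hp φ h ω).symm

lemma aux13_ac1 (hp : 0 < p) (φ : Ω → ℂ) :
    (μ.withDensity fun ω => 1 + (‖φ ω‖₊ : ℝ≥0∞) ^ p) ≪ μ :=
  withDensity_absolutelyContinuous _ _

lemma aux13_ac2 (hp : 0 < p) (φ : Ω → ℂ) :
    μ ≪ (μ.withDensity fun ω => 1 + (‖φ ω‖₊ : ℝ≥0∞) ^ p) := by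
  refine Measure.AbsolutelyContinuous.mk fun s hs h0 => ?_
  rw [withDensity_apply _ hs] at h0
  have h1 : μ s ≤ ∫⁻ ω in s, (1 + (‖φ ω‖₊ : ℝ≥0∞) ^ p) ∂μ := by
    rw [← setLIntegral_one]
    exact lintegral_mono fun ω => le_add_right le_rfl
  exact le_antisymm (h1.trans_eq h0) zero_le

end Aux13c

section Aux13d
set_option linter.unusedSectionVars false

variable {Ω : Type*} [MeasurableSpace Ω] {p : ℝ} {μ : Measure Ω} {φ : Ω → ℂ}

lemma aux13_de (hp : 0 < p) (μ : Measure Ω) (hφ : Measurable φ) (Z : Set (Ω → ℂ)) :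
    (∀ g : Ω → ℂ, MemLp g (ENNReal.ofReal p) μ → ∀ ε : ℝ, 0 < ε →
        ∃ q : Polynomial ℂ, ∃ f ∈ Z,
          eLpNorm (fun ω => Polynomial.eval (φ ω) q * f ω *
              (((1 + ‖φ ω‖ ^ p) ^ (1 / p) : ℝ) : ℂ) - g ω) (ENNReal.ofReal p) μ
            < ENNReal.ofReal ε)
      ↔
      (∀ g : Ω → ℂ,
        MemLp g (ENNReal.ofReal p) (μ.withDensity fun ω => 1 + (‖φ ω‖₊ : ℝ≥0∞) ^ p) →
        ∀ ε : ℝ, 0 < ε → ∃ q : Polynomial ℂ, ∃ f ∈ Z,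
          eLpNorm (fun ω => Polynomial.eval (φ ω) q * f ω - g ω) (ENNReal.ofReal p)
            (μ.withDensity fun ω => 1 + (‖φ ω‖₊ : ℝ≥0∞) ^ p) < ENNReal.ofReal ε) := by
  have hWm : Measurable fun ω => ((1 + ‖φ ω‖ ^ p) ^ (1 / p) : ℝ) :=
    (measurable_const.add (hφ.norm.pow measurable_const)).pow measurable_const
  have hWmC : Measurable fun ω => ((((1 + ‖φ ω‖ ^ p) ^ (1 / p) : ℝ)) : ℂ) :=
    Complex.measurable_ofReal.comp hWm
  have hWpos : ∀ ω, (0:ℝ) < (1 + ‖φ ω‖ ^ p) ^ (1 / p) := fun ω =>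
    Real.rpow_pos_of_pos (by positivity) _
  constructor
  · intro hd g hg ε hε
    obtain ⟨hgm, hgI⟩ := (aux13_memlp_iff hp _ g).mp hg
    have hg' : MemLp (fun ω => g ω * (((1 + ‖φ ω‖ ^ p) ^ (1 / p) : ℝ) : ℂ))
        (ENNReal.ofReal p) μ := by
      rw [aux13_memlp_iff hp]
      refine ⟨(hgm.mono_ac (aux13_ac2 hp φ)).mul hWmC.aestronglyMeasurable, ?_⟩
      rw [aux13_I_W hp hφ g]
      exact hgI
    obtain ⟨q, f, hf, hlt⟩ := hd _ hg' ε hε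
    refine ⟨q, f, hf, ?_⟩
    rw [aux13_lt_iff hp _ _ hε] at hlt ⊢
    rw [← aux13_I_W hp hφ (fun ω => Polynomial.eval (φ ω) q * f ω - g ω)]
    refine lt_of_eq_of_lt (lintegral_congr fun ω => ?_) hlt
    rw [sub_mul]
  · intro he g hg ε hε
    obtain ⟨hgm, hgI⟩ := (aux13_memlp_iff hp _ g).mp hg
    have hWne : ∀ ω, ((((1 + ‖φ ω‖ ^ p) ^ (1 / p) : ℝ)) : ℂ) ≠ 0 := fun ω => by
      exact_mod_cast (hWpos ω).ne'
    set g' : Ω → ℂ := fun ω => g ω * ((((1 + ‖φ ω‖ ^ p) ^ (1 / p) : ℝ)) : ℂ)⁻¹ with hg'def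
    have key : ∀ ω, g' ω * ((((1 + ‖φ ω‖ ^ p) ^ (1 / p) : ℝ)) : ℂ) = g ω := fun ω => by
      rw [hg'def]
      exact inv_mul_cancel_right₀ (hWne ω) (g ω)
    have hg' : MemLp g' (ENNReal.ofReal p)
        (μ.withDensity fun ω => 1 + (‖φ ω‖₊ : ℝ≥0∞) ^ p) := by
      rw [aux13_memlp_iff hp]
      refine ⟨(hgm.mono_ac (aux13_ac1 hp φ)).mul
        hWmC.inv.aestronglyMeasurable, ?_⟩
      rw [← aux13_I_W hp hφ g']
      refine lt_of_eq_of_lt (lintegral_congr fun ω => ?_) hgI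
      rw [key ω]
    obtain ⟨q, f, hf, hlt⟩ := he g' hg' ε hε
    refine ⟨q, f, hf, ?_⟩
    rw [aux13_lt_iff hp _ _ hε] at hlt ⊢
    rw [← aux13_I_W hp hφ (fun ω => Polynomial.eval (φ ω) q * f ω - g' ω)] at hlt
    refine lt_of_eq_of_lt (lintegral_congr fun ω => ?_) hlt
    rw [sub_mul, key ω]

end Aux13d

section Aux13e
set_option linter.unusedSectionVars false

variable {Ω : Type*} [MeasurableSpace Ω] {p : ℝ} {μ : Measure Ω} {φ : Ω → ℂ}

lemma aux13_ce (hp : 0 < p) (μ : Measure Ω) (hφ : Measurable φ) (Z : Set (Ω → ℂ))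
    (hZmeas : ∀ f ∈ Z, Measurable f) :
    (∀ g : Ω → ℂ, MemLp g (ENNReal.ofReal p) μ →
        MemLp (fun ω => φ ω * g ω) (ENNReal.ofReal p) μ → ∀ ε : ℝ, 0 < ε →
        ∃ q : Polynomial ℂ, ∃ f ∈ Z,
          eLpNorm (fun ω => Polynomial.eval (φ ω) q * f ω - g ω) (ENNReal.ofReal p) μ
              < ENNReal.ofReal ε ∧
          eLpNorm (fun ω => φ ω * (Polynomial.eval (φ ω) q * f ω) - φ ω * g ω)
              (ENNReal.ofReal p) μ < ENNReal.ofReal ε)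
      ↔
      (∀ g : Ω → ℂ,
        MemLp g (ENNReal.ofReal p) (μ.withDensity fun ω => 1 + (‖φ ω‖₊ : ℝ≥0∞) ^ p) →
        ∀ ε : ℝ, 0 < ε → ∃ q : Polynomial ℂ, ∃ f ∈ Z,
          eLpNorm (fun ω => Polynomial.eval (φ ω) q * f ω - g ω) (ENNReal.ofReal p)
            (μ.withDensity fun ω => 1 + (‖φ ω‖₊ : ℝ≥0∞) ^ p) < ENNReal.ofReal ε) := by
  constructor
  · intro hc g hg ε hε
    obtain ⟨hgm, hgI⟩ := (aux13_memlp_iff hp _ g).mp hg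
    have hgmμ : AEStronglyMeasurable g μ := hgm.mono_ac (aux13_ac2 hp φ)
    rw [aux13_I_nu hp hφ hgmμ.aemeasurable] at hgI
    obtain ⟨hA, hB⟩ := ENNReal.add_lt_top.mp hgI
    have h1 : MemLp g (ENNReal.ofReal p) μ := (aux13_memlp_iff hp _ g).mpr ⟨hgmμ, hA⟩
    have h2 : MemLp (fun ω => φ ω * g ω) (ENNReal.ofReal p) μ :=
      (aux13_memlp_iff hp _ _).mpr ⟨hφ.aestronglyMeasurable.mul hgmμ, hB⟩
    set δ : ℝ := ε / 2 ^ (1 / p) with hδdef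
    have hδ : 0 < δ := div_pos hε (Real.rpow_pos_of_pos two_pos _)
    have hδp : δ ^ p = ε ^ p / 2 := by
      rw [hδdef, Real.div_rpow hε.le (Real.rpow_nonneg (by norm_num) _),
        ← Real.rpow_mul (by norm_num : (0:ℝ) ≤ 2), one_div_mul_cancel hp.ne',
        Real.rpow_one]
    obtain ⟨q, f, hf, hlt1, hlt2⟩ := hc g h1 h2 δ hδ
    refine ⟨q, f, hf, ?_⟩
    rw [aux13_lt_iff hp _ _ hε]
    have hqfm : Measurable fun ω => Polynomial.eval (φ ω) q * f ω :=
      (q.continuous.measurable.comp hφ).mul (hZmeas f hf)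
    rw [aux13_I_nu hp hφ (h := fun ω => Polynomial.eval (φ ω) q * f ω - g ω) (hqfm.aemeasurable.sub hgmμ.aemeasurable)]
    rw [aux13_lt_iff hp _ _ hδ] at hlt1 hlt2
    have hlt2' : ∫⁻ ω, (‖φ ω * ((fun ω => Polynomial.eval (φ ω) q * f ω - g ω) ω)‖₊ : ℝ≥0∞) ^ p ∂μ
        < ENNReal.ofReal (δ ^ p) := by
      refine lt_of_eq_of_lt (lintegral_congr fun ω => ?_) hlt2
      rw [mul_sub]
    calc _ < ENNReal.ofReal (δ ^ p) + ENNReal.ofReal (δ ^ p) :=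
          ENNReal.add_lt_add hlt1 hlt2'
      _ = ENNReal.ofReal (ε ^ p) := by
          rw [hδp, ← ENNReal.ofReal_add (by positivity) (by positivity), add_halves]
  · intro he g hg hφg ε hε
    obtain ⟨hgm, hA⟩ := (aux13_memlp_iff hp _ g).mp hg
    obtain ⟨-, hB⟩ := (aux13_memlp_iff hp _ _).mp hφg
    have hgν : MemLp g (ENNReal.ofReal p)
        (μ.withDensity fun ω => 1 + (‖φ ω‖₊ : ℝ≥0∞) ^ p) := by
      rw [aux13_memlp_iff hp]
      refine ⟨hgm.mono_ac (aux13_ac1 hp φ), ?_⟩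
      rw [aux13_I_nu hp hφ hgm.aemeasurable]
      exact ENNReal.add_lt_top.mpr ⟨hA, hB⟩
    obtain ⟨q, f, hf, hlt⟩ := he g hgν ε hε
    have hqfm : Measurable fun ω => Polynomial.eval (φ ω) q * f ω :=
      (q.continuous.measurable.comp hφ).mul (hZmeas f hf)
    rw [aux13_lt_iff hp _ _ hε,
      aux13_I_nu hp hφ (h := fun ω => Polynomial.eval (φ ω) q * f ω - g ω) (hqfm.aemeasurable.sub hgm.aemeasurable)] at hlt
    refine ⟨q, f, hf, ?_, ?_⟩ <;> rw [aux13_lt_iff hp _ _ hε]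
    · exact lt_of_le_of_lt le_self_add hlt
    · refine lt_of_le_of_lt ?_ hlt
      refine le_trans (le_of_eq (lintegral_congr fun ω => ?_)) le_add_self
      rw [mul_sub]

end Aux13e

/-- For `p ∈ (0,∞)`, a finite measure space `(Ω,𝒜,μ)`, measurable `φ`, and a set `Z` of
measurable functions with `q(φ)·f ∈ L^p(μ)` for all `q ∈ Π(z)`, `f ∈ Z`, the following are
equivalent for `G = {q(φ)·f}`: (c) the graph pairs `(g, φ·g)`, `g ∈ G`, are dense in the
graph of `M_φ`; (d) `G·(1+|φ|^p)^{1/p}` is dense in `L^p(μ)`; (e) `G` is dense in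
`L^p((1+|φ|^p)·μ)`. -/
theorem stmt_13 (p : ℝ) (hp : 0 < p) {Ω : Type*} [MeasurableSpace Ω] (μ : Measure Ω)
    [IsFiniteMeasure μ] (φ : Ω → ℂ) (hφ : Measurable φ)
    (Z : Set (Ω → ℂ)) (hZmeas : ∀ f ∈ Z, Measurable f)
    (hZLp : ∀ q : Polynomial ℂ, ∀ f ∈ Z,
      MemLp (fun ω => Polynomial.eval (φ ω) q * f ω) (ENNReal.ofReal p) μ) :
    ((∀ g : Ω → ℂ, MemLp g (ENNReal.ofReal p) μ →
        MemLp (fun ω => φ ω * g ω) (ENNReal.ofReal p) μ → ∀ ε : ℝ, 0 < ε →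
        ∃ q : Polynomial ℂ, ∃ f ∈ Z,
          eLpNorm (fun ω => Polynomial.eval (φ ω) q * f ω - g ω) (ENNReal.ofReal p) μ
              < ENNReal.ofReal ε ∧
          eLpNorm (fun ω => φ ω * (Polynomial.eval (φ ω) q * f ω) - φ ω * g ω)
              (ENNReal.ofReal p) μ < ENNReal.ofReal ε)
      ↔
      (∀ g : Ω → ℂ, MemLp g (ENNReal.ofReal p) μ → ∀ ε : ℝ, 0 < ε →
        ∃ q : Polynomial ℂ, ∃ f ∈ Z,
          eLpNorm (fun ω => Polynomial.eval (φ ω) q * f ω *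
              (((1 + ‖φ ω‖ ^ p) ^ (1 / p) : ℝ) : ℂ) - g ω) (ENNReal.ofReal p) μ
            < ENNReal.ofReal ε))
    ∧
    ((∀ g : Ω → ℂ, MemLp g (ENNReal.ofReal p) μ → ∀ ε : ℝ, 0 < ε →
        ∃ q : Polynomial ℂ, ∃ f ∈ Z,
          eLpNorm (fun ω => Polynomial.eval (φ ω) q * f ω *
              (((1 + ‖φ ω‖ ^ p) ^ (1 / p) : ℝ) : ℂ) - g ω) (ENNReal.ofReal p) μ
            < ENNReal.ofReal ε)
      ↔
      (∀ g : Ω → ℂ,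
        MemLp g (ENNReal.ofReal p) (μ.withDensity fun ω => 1 + (‖φ ω‖₊ : ℝ≥0∞) ^ p) →
        ∀ ε : ℝ, 0 < ε → ∃ q : Polynomial ℂ, ∃ f ∈ Z,
          eLpNorm (fun ω => Polynomial.eval (φ ω) q * f ω - g ω) (ENNReal.ofReal p)
            (μ.withDensity fun ω => 1 + (‖φ ω‖₊ : ℝ≥0∞) ^ p) < ENNReal.ofReal ε)) := by
  exact ⟨(aux13_ce hp μ hφ Z hZmeas).trans (aux13_de hp μ hφ Z).symm,
    aux13_de hp μ hφ Z⟩
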